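/- Let n be an even positive integer, ℓ ≥ 1 an integer, and d > 0. Define k̃_ℓ(r,t) = t k_{ℓ+1}(√(t²−r²)/2) − 2 k_ℓ(√(t²−r²)/2) with k_ℓ as below. Then there exists T ≥ d such that for all t ≥ T, the map r ↦ e^{−t/2} k̃_ℓ(r,t) is strictly increasing on [0,d]. -/

import Mathlib

open Set

noncomputable section

/-- `k_ℓ(s) = Σ_{j=0}^∞ s^{2j+1} / ((2(j+ℓ))!! (2j+1)!!)`. -/
def kEven (ℓ : ℕ) (s : ℝ) : ℝ :=
  ∑' j : ℕ, s ^ (2 * j + 1) /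
    (((2 * (j + ℓ)).doubleFactorial : ℝ) * ((2 * j + 1).doubleFactorial : ℝ))

/-- `k̃_ℓ(r,t) = t k_{ℓ+1}(√(t²−r²)/2) − 2 k_ℓ(√(t²−r²)/2)`. -/
def kTilde (ℓ : ℕ) (r t : ℝ) : ℝ :=
  t * kEven (ℓ + 1) (Real.sqrt (t ^ 2 - r ^ 2) / 2)
    - 2 * kEven ℓ (Real.sqrt (t ^ 2 - r ^ 2) / 2)

namespace Stmt18Aux

/-- The coefficient denominator. -/
def cc (ℓ j : ℕ) : ℝ :=
  ((2 * (j + ℓ)).doubleFactorial : ℝ) * ((2 * j + 1).doubleFactorial : ℝ)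

lemma cc_pos (ℓ j : ℕ) : 0 < cc ℓ j := by
  have h1 := Nat.doubleFactorial_pos (2 * (j + ℓ))
  have h2 := Nat.doubleFactorial_pos (2 * j + 1)
  unfold cc
  positivity

lemma cc_succ_right (ℓ j : ℕ) :
    cc ℓ (j + 1) = ((2 * j + 2 * ℓ + 2) * (2 * j + 3)) * cc ℓ j := by
  unfold cc
  have e1 : 2 * (j + 1 + ℓ) = 2 * (j + ℓ) + 2 := by ring
  have e2 : 2 * (j + 1) + 1 = (2 * j + 1) + 2 := by ring
  rw [e1, e2, Nat.doubleFactorial_add_two, Nat.doubleFactorial_add_two]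
  push_cast
  ring

lemma cc_succ_left (ℓ j : ℕ) :
    cc (ℓ + 1) j = (2 * j + 2 * ℓ + 2) * cc ℓ j := by
  unfold cc
  have e1 : 2 * (j + (ℓ + 1)) = 2 * (j + ℓ) + 2 := by ring
  rw [e1, Nat.doubleFactorial_add_two]
  push_cast
  ring

lemma factorial_le_cc (ℓ j : ℕ) : (((2 * j + 1).factorial : ℕ) : ℝ) ≤ cc ℓ j := by
  have h1 : Nat.doubleFactorial (2 * j) ≤ Nat.doubleFactorial (2 * (j + ℓ)) := by
    induction ℓ with
    | zero => simp
    | succ n ih =>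
      have e1 : 2 * (j + (n + 1)) = 2 * (j + n) + 2 := by ring
      rw [e1, Nat.doubleFactorial_add_two]
      calc Nat.doubleFactorial (2 * j) ≤ Nat.doubleFactorial (2 * (j + n)) := ih
        _ ≤ (2 * (j + n) + 2) * Nat.doubleFactorial (2 * (j + n)) :=
            Nat.le_mul_of_pos_left _ (by omega)
  have h2 : (2 * j + 1).factorial ≤
      Nat.doubleFactorial (2 * (j + ℓ)) * Nat.doubleFactorial (2 * j + 1) := by
    rw [Nat.factorial_eq_mul_doubleFactorial, mul_comm]
    exact Nat.mul_le_mul h1 le_rfl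
  unfold cc
  exact_mod_cast h2

lemma summable_term (ℓ : ℕ) {s : ℝ} (hs : 0 ≤ s) :
    Summable (fun j : ℕ => s ^ (2 * j + 1) / cc ℓ j) := by
  have hmaj : Summable (fun j : ℕ => s ^ (2 * j + 1) / ((2 * j + 1).factorial : ℝ)) := by
    have h := Real.summable_pow_div_factorial s
    exact h.comp_injective (fun a b hab => by omega)
  refine Summable.of_nonneg_of_le
    (fun j => div_nonneg (pow_nonneg hs _) (cc_pos ℓ j).le) (fun j => ?_) hmaj
  have hfpos : (0 : ℝ) < ((2 * j + 1).factorial : ℝ) := by positivity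
  exact div_le_div_of_nonneg_left (pow_nonneg hs _) hfpos (factorial_le_cc ℓ j)

lemma kEven_eq (ℓ : ℕ) (s : ℝ) : kEven ℓ s = ∑' j : ℕ, s ^ (2 * j + 1) / cc ℓ j := rfl

lemma kEven_mono (ℓ : ℕ) {s₂ s₁ : ℝ} (h2 : 0 ≤ s₂) (h : s₂ ≤ s₁) :
    kEven ℓ s₂ ≤ kEven ℓ s₁ := by
  rw [kEven_eq, kEven_eq]
  refine Summable.tsum_le_tsum (fun j => ?_) (summable_term ℓ h2) (summable_term ℓ (h2.trans h))
  exact (div_le_div_iff_of_pos_right (cc_pos ℓ j)).2 (pow_le_pow_left₀ h2 h _)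

lemma arith_key {J L : ℝ} (hJ : 0 ≤ J) (hL : 1 ≤ L) :
    4 * ((2 * J + 2 * L + 2) + 2) * (2 * J + 3)
      ≤ (2 * (2 * J + 2 * L + 2) - 1) * (2 * (2 * J + 2 * L + 2) + 3) := by
  nlinarith

lemma qab {m P c : ℝ} (hm : 4 ≤ m) (hc : 0 < c) (hP : 0 < P)
    (hkey : 4 * (m + 2) * P ≤ (2 * m - 1) * (2 * m + 3)) :
    (2 / (m * c)) ^ 2 ≤ ((2 - 1 / m) / c) * ((2 - 1 / (m + 2)) / ((m * P) * c)) := by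
  have hm0 : 0 < m := by linarith
  have hm2 : 0 < m + 2 := by linarith
  rw [div_pow, div_mul_div_comm, div_le_div_iff₀ (by positivity) (by positivity)]
  have hm' : m ≠ 0 := ne_of_gt hm0
  have hm2' : m + 2 ≠ 0 := ne_of_gt hm2
  have hX : (2 - 1 / m) * (2 - 1 / (m + 2)) * (m * (m + 2)) = (2 * m - 1) * (2 * m + 3) := by
    field_simp
    ring_nf
  have hpos : (0 : ℝ) < m * (m + 2) := by positivity
  rw [← mul_le_mul_iff_of_pos_right hpos]
  have h2 : 4 * (m + 2) * P * (m ^ 2 * c ^ 2) ≤ (2 * m - 1) * (2 * m + 3) * (m ^ 2 * c ^ 2) :=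
    mul_le_mul_of_nonneg_right hkey (by positivity)
  calc 2 ^ 2 * (c * (m * P * c)) * (m * (m + 2))
      = 4 * (m + 2) * P * (m ^ 2 * c ^ 2) := by ring
    _ ≤ (2 * m - 1) * (2 * m + 3) * (m ^ 2 * c ^ 2) := h2
    _ = (2 - 1 / m) * (2 - 1 / (m + 2)) * (m * c) ^ 2 * (m * (m + 2)) := by
        rw [← hX]
        ring

lemma quad {a b q y : ℝ} (ha : 0 ≤ a) (hb : 0 ≤ b) (hq : 0 ≤ q) (hy : 0 ≤ y)
    (h : q ^ 2 ≤ a * b) : 2 * q * y ≤ a + b * y ^ 2 := by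
  have h1 : q ≤ Real.sqrt (a * b) := by
    rw [show q = Real.sqrt (q ^ 2) by rw [Real.sqrt_sq hq]]
    exact Real.sqrt_le_sqrt h
  have h2 : Real.sqrt (a * b) = Real.sqrt a * Real.sqrt b := Real.sqrt_mul ha b
  have h3 : 2 * Real.sqrt a * (Real.sqrt b * y) ≤
      (Real.sqrt a) ^ 2 + (Real.sqrt b * y) ^ 2 := two_mul_le_add_sq _ _
  have h4 : (Real.sqrt a) ^ 2 = a := Real.sq_sqrt ha
  have h5 : (Real.sqrt b * y) ^ 2 = b * y ^ 2 := by
    rw [mul_pow, Real.sq_sqrt hb]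
  have h6 : 2 * q * y ≤ 2 * (Real.sqrt a * Real.sqrt b) * y := by
    have := Real.sqrt_nonneg (a * b)
    nlinarith
  nlinarith [h3, h4, h5, h6, h2]

/-- Core inequality. -/
lemma core (ℓ : ℕ) (hℓ : 1 ≤ ℓ) {s₂ s₁ : ℝ} (h₂ : 0 ≤ s₂) (h : s₂ < s₁) :
    (2 * s₂ + 1) * (kEven (ℓ + 1) s₁ - kEven (ℓ + 1) s₂)
      < 2 * (kEven ℓ s₁ - kEven ℓ s₂) := by
  have h₁ : 0 ≤ s₁ := h₂.trans h.le
  set A : ℕ → ℝ := fun j => s₁ ^ (2 * j + 1) - s₂ ^ (2 * j + 1) with hAdef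
  have hApos : ∀ j, 0 < A j := fun j =>
    sub_pos.2 (pow_lt_pow_left₀ h h₂ (by omega))
  set m : ℕ → ℝ := fun j => 2 * (j : ℝ) + 2 * (ℓ : ℝ) + 2 with hmdef
  have hm4 : ∀ j, (4 : ℝ) ≤ m j := by
    intro j
    have : (1 : ℝ) ≤ (ℓ : ℝ) := by exact_mod_cast hℓ
    have : (0 : ℝ) ≤ (j : ℝ) := Nat.cast_nonneg j
    simp only [hmdef]
    linarith
  have hmpos : ∀ j, (0 : ℝ) < m j := fun j => lt_of_lt_of_le (by norm_num) (hm4 j)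
  set D0 : ℕ → ℝ := fun j => A j / cc ℓ j with hD0def
  set D1 : ℕ → ℝ := fun j => A j / cc (ℓ + 1) j with hD1def
  have hD0pos : ∀ j, 0 < D0 j := fun j => div_pos (hApos j) (cc_pos ℓ j)
  have hD1pos : ∀ j, 0 < D1 j := fun j => div_pos (hApos j) (cc_pos (ℓ + 1) j)
  set F : ℕ → ℝ := fun j => (2 - 1 / m j) * D0 j with hFdef
  set g : ℕ → ℝ := fun j => 2 * s₂ * D1 j with hgdef
  have hccL : ∀ j, cc (ℓ + 1) j = m j * cc ℓ j := fun j => cc_succ_left ℓ j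
  have hccR : ∀ j, cc ℓ (j + 1) = (m j * (2 * (j : ℝ) + 3)) * cc ℓ j := fun j => by
    rw [cc_succ_right]
  -- 2 * D0 j = F j + D1 j
  have hsplit : ∀ j, 2 * D0 j = F j + D1 j := by
    intro j
    simp only [hFdef, hD0def, hD1def, hccL j]
    have hc := cc_pos ℓ j
    have hmj := hmpos j
    field_simp
    ring
  -- summability
  have hsumt1 : Summable (fun j : ℕ => s₁ ^ (2 * j + 1) / cc ℓ j) := summable_term ℓ h₁
  have hsumt2 : Summable (fun j : ℕ => s₂ ^ (2 * j + 1) / cc ℓ j) := summable_term ℓ h₂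
  have hsumD0 : Summable D0 := by
    have := hsumt1.sub hsumt2
    refine this.congr fun j => ?_
    simp only [hD0def, hAdef]
    rw [sub_div]
  have hsumD1 : Summable D1 := by
    have := (summable_term (ℓ + 1) h₁).sub (summable_term (ℓ + 1) h₂)
    refine this.congr fun j => ?_
    simp only [hD1def, hAdef]
    rw [sub_div]
  have hsumF : Summable F := by
    refine Summable.of_nonneg_of_le (fun j => ?_) (fun j => ?_) (hsumD0.mul_left 2)
    · have h1m : 1 / m j ≤ 2 := by
        rw [div_le_iff₀ (hmpos j)]; nlinarith [hm4 j]
      exact mul_nonneg (by linarith) (hD0pos j).le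
    · have h1m : 0 ≤ 1 / m j := by positivity
      have : (2 - 1 / m j) ≤ 2 := by linarith
      exact mul_le_mul_of_nonneg_right this (hD0pos j).le
  have hsumFs : Summable (fun j => F (j + 1)) := (summable_nat_add_iff 1).2 hsumF
  have hsumg : Summable g := hsumD1.mul_left _
  -- key termwise inequality
  have key : ∀ j, 2 * g j ≤ F j + F (j + 1) := by
    intro j
    have hc := cc_pos ℓ j
    have hmj := hmpos j
    have hm4j := hm4 j
    -- A (j+1) ≥ s₂ ^ 2 * A j
    have hAstep : s₂ ^ 2 * A j ≤ A (j + 1) := by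
      simp only [hAdef]
      have e1 : 2 * (j + 1) + 1 = (2 * j + 1) + 2 := by ring
      rw [e1]
      have h1 : s₂ ^ 2 * s₁ ^ (2 * j + 1) ≤ s₁ ^ ((2 * j + 1) + 2) := by
        have hpa : s₁ ^ ((2 * j + 1) + 2) = s₁ ^ (2 * j + 1) * s₁ ^ 2 := pow_add s₁ _ _
        have hss : s₂ ^ 2 ≤ s₁ ^ 2 := pow_le_pow_left₀ h₂ h.le 2
        rw [hpa]
        calc s₂ ^ 2 * s₁ ^ (2 * j + 1) ≤ s₁ ^ 2 * s₁ ^ (2 * j + 1) :=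
              mul_le_mul_of_nonneg_right hss (pow_nonneg h₁ _)
          _ = s₁ ^ (2 * j + 1) * s₁ ^ 2 := by ring
      have h2 : s₂ ^ ((2 * j + 1) + 2) = s₂ ^ (2 * j + 1) * s₂ ^ 2 := by rw [pow_add]
      nlinarith [pow_nonneg h₂ (2 * j + 1)]
    have hma : m (j + 1) = m j + 2 := by simp only [hmdef]; push_cast; ring
    -- a, b, q
    set a : ℝ := (2 - 1 / m j) / cc ℓ j with hadef
    set b : ℝ := (2 - 1 / (m j + 2)) / ((m j * (2 * (j : ℝ) + 3)) * cc ℓ j) with hbdef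
    set q : ℝ := 2 / (m j * cc ℓ j) with hqdef
    have hj3 : (0 : ℝ) < 2 * (j : ℝ) + 3 := by positivity
    have ha : 0 ≤ a := by
      have : 1 / m j ≤ 1 := by rw [div_le_one hmj]; linarith
      have h2 : (0:ℝ) ≤ 2 - 1 / m j := by linarith
      exact div_nonneg h2 hc.le
    have hb : 0 ≤ b := by
      have : 1 / (m j + 2) ≤ 1 := by rw [div_le_one (by linarith)]; linarith
      have h2 : (0:ℝ) ≤ 2 - 1 / (m j + 2) := by linarith
      exact div_nonneg h2 (by positivity)
    have hq : 0 ≤ q := by positivity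
    -- q^2 ≤ a * b
    have hqab : q ^ 2 ≤ a * b := by
      have hℓ1 : (1 : ℝ) ≤ (ℓ : ℝ) := by exact_mod_cast hℓ
      have hjnn : (0 : ℝ) ≤ (j : ℝ) := Nat.cast_nonneg j
      have hkey : 4 * (m j + 2) * (2 * (j : ℝ) + 3) ≤ (2 * m j - 1) * (2 * m j + 3) := by
        have := arith_key hjnn hℓ1
        simp only [hmdef]
        linarith
      simp only [hadef, hbdef, hqdef]
      exact qab hm4j hc hj3 hkey
    have hquad : 2 * q * s₂ ≤ a + b * s₂ ^ 2 := quad ha hb hq h₂ hqab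
    -- conclude
    have hFj : F j = a * A j := by
      simp only [hFdef, hD0def, hadef]; ring
    have hFj1 : F (j + 1) ≥ b * (s₂ ^ 2 * A j) := by
      have : F (j + 1) = (2 - 1 / (m j + 2)) / ((m j * (2 * (j : ℝ) + 3)) * cc ℓ j) * A (j + 1) := by
        simp only [hFdef, hD0def]
        rw [hccR j, hma]
        ring
      rw [this]
      have hb' : (0:ℝ) ≤ (2 - 1 / (m j + 2)) / ((m j * (2 * (j : ℝ) + 3)) * cc ℓ j) := hb
      calc b * (s₂ ^ 2 * A j) ≤ b * A (j + 1) := by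
            exact mul_le_mul_of_nonneg_left hAstep hb
        _ = _ := by rw [hbdef]
    have hgj : g j = q * s₂ * A j := by
      simp only [hgdef, hD1def, hccL j, hqdef]
      field_simp
    have := mul_le_mul_of_nonneg_right hquad (hApos j).le
    calc 2 * g j = (2 * q * s₂) * A j := by rw [hgj]; ring
      _ ≤ (a + b * s₂ ^ 2) * A j := this
      _ = a * A j + b * (s₂ ^ 2 * A j) := by ring
      _ ≤ F j + F (j + 1) := by rw [hFj]; linarith [hFj1]
  -- sum it up
  have hsum_key : 2 * ∑' j, g j ≤ 2 * ∑' j, F j - F 0 := by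
    have h1 : ∑' j, (2 * g j) ≤ ∑' j, (F j + F (j + 1)) :=
      Summable.tsum_le_tsum key (hsumg.mul_left 2) (hsumF.add hsumFs)
    have h2 : ∑' j, (2 * g j) = 2 * ∑' j, g j := tsum_mul_left
    have h3 : ∑' j, (F j + F (j + 1)) = (∑' j, F j) + ∑' j, F (j + 1) :=
      Summable.tsum_add hsumF hsumFs
    have h4 : ∑' j, F j = F 0 + ∑' j, F (j + 1) := Summable.tsum_eq_zero_add hsumF
    linarith
  have hF0 : 0 < F 0 := by
    have h1m : 1 / m 0 ≤ 1 := by rw [div_le_one (hmpos 0)]; linarith [hm4 0]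
    exact mul_pos (by linarith) (hD0pos 0)
  -- rewrite goal
  have hK0 : kEven ℓ s₁ - kEven ℓ s₂ = ∑' j, D0 j := by
    rw [kEven_eq, kEven_eq, ← Summable.tsum_sub hsumt1 hsumt2]
    congr 1; funext j; simp only [hD0def, hAdef]; rw [sub_div]
  have hK1 : kEven (ℓ + 1) s₁ - kEven (ℓ + 1) s₂ = ∑' j, D1 j := by
    rw [kEven_eq, kEven_eq, ← Summable.tsum_sub (summable_term (ℓ + 1) h₁) (summable_term (ℓ + 1) h₂)]
    congr 1; funext j; simp only [hD1def, hAdef]; rw [sub_div]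
  rw [hK0, hK1]
  have hg_eq : ∑' j, g j = 2 * s₂ * ∑' j, D1 j := tsum_mul_left
  have hsplit_sum : 2 * ∑' j, D0 j = (∑' j, F j) + ∑' j, D1 j := by
    rw [← tsum_mul_left, ← Summable.tsum_add hsumF hsumD1]
    congr 1; funext j; exact hsplit j
  nlinarith [hF0, hsum_key, hg_eq, hsplit_sum]

end Stmt18Aux

open Stmt18Aux in
/-- For `ℓ ≥ 1` and `d > 0`, there exists `T ≥ d` such that for all
`t ≥ T` the map `r ↦ e^{−t/2} k̃_ℓ(r,t)` is strictly increasing on `[0,d]`. -/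
theorem stmt18 (ℓ : ℕ) (hℓ : 1 ≤ ℓ) (d : ℝ) (hd : 0 < d) :
    ∃ T : ℝ, T ≥ d ∧ ∀ t ≥ T,
      StrictMonoOn (fun r => Real.exp (-t / 2) * kTilde ℓ r t) (Icc (0:ℝ) d) := by
  refine ⟨d + d ^ 2, by nlinarith, ?_⟩
  intro t ht
  intro r₁ hr₁ r₂ hr₂ h12
  obtain ⟨hr₁0, hr₁d⟩ := hr₁
  obtain ⟨hr₂0, hr₂d⟩ := hr₂
  have htd : d ≤ t := by nlinarith
  have ht0 : 0 < t := lt_of_lt_of_le hd htd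
  set s₁ : ℝ := Real.sqrt (t ^ 2 - r₁ ^ 2) / 2 with hs₁def
  set s₂ : ℝ := Real.sqrt (t ^ 2 - r₂ ^ 2) / 2 with hs₂def
  have hr₂t : r₂ ≤ t := hr₂d.trans htd
  have h2nn : 0 ≤ t ^ 2 - r₂ ^ 2 := by nlinarith
  have hs₂0 : 0 ≤ s₂ := by positivity
  have hlt : s₂ < s₁ := by
    have h1 : t ^ 2 - r₂ ^ 2 < t ^ 2 - r₁ ^ 2 := by nlinarith
    have := Real.sqrt_lt_sqrt h2nn h1
    simp only [hs₁def, hs₂def]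
    linarith
  have hs₂big : d ^ 2 ≤ 2 * s₂ := by
    have h1 : d ^ 4 ≤ t ^ 2 - r₂ ^ 2 := by nlinarith
    have h2 : Real.sqrt (d ^ 4) ≤ Real.sqrt (t ^ 2 - r₂ ^ 2) := Real.sqrt_le_sqrt h1
    have h3 : Real.sqrt (d ^ 4) = d ^ 2 := by
      rw [show d ^ 4 = (d ^ 2) ^ 2 by ring, Real.sqrt_sq (by positivity)]
    simp only [hs₂def]
    linarith
  have htle : t ≤ 2 * s₂ + 1 := by
    have hsq : (2 * s₂) ^ 2 = t ^ 2 - r₂ ^ 2 := by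
      simp only [hs₂def]
      rw [show 2 * (Real.sqrt (t ^ 2 - r₂ ^ 2) / 2) = Real.sqrt (t ^ 2 - r₂ ^ 2) by ring,
        Real.sq_sqrt h2nn]
    nlinarith
  have hcore := core ℓ hℓ hs₂0 hlt
  have hmono := kEven_mono (ℓ + 1) hs₂0 hlt.le
  have hexp : 0 < Real.exp (-t / 2) := Real.exp_pos _
  show Real.exp (-t / 2) * kTilde ℓ r₁ t < Real.exp (-t / 2) * kTilde ℓ r₂ t
  apply mul_lt_mul_of_pos_left _ hexp
  show kTilde ℓ r₁ t < kTilde ℓ r₂ t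
  unfold kTilde
  rw [← hs₁def, ← hs₂def]
  have hΔ1 : 0 ≤ kEven (ℓ + 1) s₁ - kEven (ℓ + 1) s₂ := by linarith
  have ht1 : t * (kEven (ℓ + 1) s₁ - kEven (ℓ + 1) s₂) ≤
      (2 * s₂ + 1) * (kEven (ℓ + 1) s₁ - kEven (ℓ + 1) s₂) :=
    mul_le_mul_of_nonneg_right htle hΔ1
  nlinarith
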